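/- arXiv:2303.14020 — 2 statements merged into one kernel-verified Lean document; each statement's English description precedes it below -/
import Mathlib

section
/- Let X₁,…,Xₙ be independent real random variables, ν > 0 and c > 0 constants such that Σₖ E[Xₖ²] ≤ ν and for all integers ℓ ≥ 3, Σₖ E[|Xₖ|^ℓ] ≤ (ℓ!/2) ν c^{ℓ-2}. Then for all t > 0, P(|Σₖ (Xₖ − E[Xₖ])| ≥ t) ≤ 2·exp(−t²/(2(ν + c t))). -/
open MeasureTheory ProbabilityTheory

lemma exp_tsum (x : ℝ) : Real.exp x = ∑' ℓ : ℕ, x ^ ℓ / (Nat.factorial ℓ : ℝ) := by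
  rw [Real.exp_eq_exp_ℝ, NormedSpace.exp_eq_tsum_div]

lemma summable_aux {ν c lam : ℝ} (hν : 0 < ν) (hc : 0 < c) (hl : 0 ≤ lam)
    (hlc : lam * c < 1) (a : ℕ → ℝ) (ha0 : ∀ ℓ, 0 ≤ a ℓ)
    (ha : ∀ ℓ, 3 ≤ ℓ → a ℓ ≤ (Nat.factorial ℓ : ℝ) / 2 * ν * c ^ (ℓ - 2)) :
    Summable (fun ℓ : ℕ => lam ^ ℓ * a ℓ / (Nat.factorial ℓ : ℝ)) := by
  rw [← summable_nat_add_iff 3]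
  have hgeo : Summable (fun ℓ : ℕ => (ν / 2 * lam ^ 2 * (lam * c)) * (lam * c) ^ ℓ) :=
    (summable_geometric_of_lt_one (mul_nonneg hl hc.le) hlc).mul_left _
  refine hgeo.of_nonneg_of_le (fun ℓ => div_nonneg (mul_nonneg (pow_nonneg hl _) (ha0 _)) (Nat.cast_nonneg _)) (fun ℓ => ?_)
  have hfac : (0 : ℝ) < (Nat.factorial (ℓ + 3) : ℝ) := by positivity
  have h1 : a (ℓ + 3) ≤ (Nat.factorial (ℓ + 3) : ℝ) / 2 * ν * c ^ (ℓ + 1) := by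
    have := ha (ℓ + 3) (by omega)
    simpa using this
  have h2 : lam ^ (ℓ + 3) * a (ℓ + 3) / (Nat.factorial (ℓ + 3) : ℝ)
      ≤ lam ^ (ℓ + 3) * ((Nat.factorial (ℓ + 3) : ℝ) / 2 * ν * c ^ (ℓ + 1))
        / (Nat.factorial (ℓ + 3) : ℝ) := by
    gcongr
  refine h2.trans_eq ?_
  field_simp
  ring

lemma integrable_exp_lam {Ω : Type*} [MeasurableSpace Ω] (μ : Measure Ω)
    [IsProbabilityMeasure μ] (f : Ω → ℝ) (hf : Measurable f) {lam : ℝ} (hl : 0 ≤ lam)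
    (hint : ∀ ℓ : ℕ, 1 ≤ ℓ → Integrable (fun ω => |f ω| ^ ℓ) μ)
    (hsum : Summable (fun ℓ : ℕ => lam ^ ℓ * (∫ ω, |f ω| ^ ℓ ∂μ) / (Nat.factorial ℓ : ℝ))) :
    Integrable (fun ω => Real.exp (lam * f ω)) μ := by
  have habs : ∀ ℓ : ℕ, Integrable (fun ω => (lam * |f ω|) ^ ℓ / (Nat.factorial ℓ : ℝ)) μ := by
    intro ℓ
    rcases Nat.eq_zero_or_pos ℓ with h0 | h1
    · simp [h0]
    · have := ((hint ℓ h1).const_mul (lam ^ ℓ)).div_const (Nat.factorial ℓ : ℝ)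
      refine this.congr ?_
      filter_upwards with ω
      rw [mul_pow]
  have hnn : ∀ ℓ : ℕ, 0 ≤ lam ^ ℓ * (∫ ω, |f ω| ^ ℓ ∂μ) / (Nat.factorial ℓ : ℝ) := by
    intro ℓ
    have : 0 ≤ ∫ ω, |f ω| ^ ℓ ∂μ := integral_nonneg fun ω => by positivity
    positivity
  refine ⟨((hf.const_mul lam).exp).aestronglyMeasurable, ?_⟩
  rw [hasFiniteIntegral_iff_norm]
  calc ∫⁻ ω, ENNReal.ofReal ‖Real.exp (lam * f ω)‖ ∂μ
      = ∫⁻ ω, ENNReal.ofReal (Real.exp (lam * f ω)) ∂μ := by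
        congr 1; funext ω; rw [Real.norm_of_nonneg (Real.exp_nonneg _)]
    _ ≤ ∫⁻ ω, ENNReal.ofReal (Real.exp (lam * |f ω|)) ∂μ := by
        refine lintegral_mono fun ω => ENNReal.ofReal_le_ofReal ?_
        exact Real.exp_le_exp.2 (mul_le_mul_of_nonneg_left (le_abs_self _) hl)
    _ = ∫⁻ ω, ∑' ℓ : ℕ, ENNReal.ofReal ((lam * |f ω|) ^ ℓ / (Nat.factorial ℓ : ℝ)) ∂μ := by
        congr 1; funext ω
        rw [exp_tsum, ENNReal.ofReal_tsum_of_nonneg (fun ℓ => by positivity)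
          (Real.summable_pow_div_factorial _)]
    _ = ∑' ℓ : ℕ, ∫⁻ ω, ENNReal.ofReal ((lam * |f ω|) ^ ℓ / (Nat.factorial ℓ : ℝ)) ∂μ := by
        refine lintegral_tsum fun ℓ => ?_
        exact (ENNReal.measurable_ofReal.comp
          (((hf.abs.const_mul lam).pow_const ℓ).div_const _)).aemeasurable
    _ = ∑' ℓ : ℕ, ENNReal.ofReal (∫ ω, (lam * |f ω|) ^ ℓ / (Nat.factorial ℓ : ℝ) ∂μ) := by
        congr 1; funext ℓ
        rw [ofReal_integral_eq_lintegral_ofReal (habs ℓ)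
          (Filter.Eventually.of_forall fun ω => by positivity)]
    _ = ∑' ℓ : ℕ, ENNReal.ofReal (lam ^ ℓ * (∫ ω, |f ω| ^ ℓ ∂μ) / (Nat.factorial ℓ : ℝ)) := by
        congr 1; funext ℓ
        congr 1
        simp_rw [mul_pow, mul_div_assoc]
        rw [MeasureTheory.integral_const_mul, integral_div]
    _ = ENNReal.ofReal (∑' ℓ : ℕ, lam ^ ℓ * (∫ ω, |f ω| ^ ℓ ∂μ) / (Nat.factorial ℓ : ℝ)) :=
        (ENNReal.ofReal_tsum_of_nonneg hnn hsum).symm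
    _ < ⊤ := ENNReal.ofReal_lt_top

lemma mgf_centered_le {Ω : Type*} [MeasurableSpace Ω] (μ : Measure Ω)
    [IsProbabilityMeasure μ] (f : Ω → ℝ) (hf : Measurable f) {lam : ℝ} (hl : 0 ≤ lam)
    (hint : ∀ ℓ : ℕ, 1 ≤ ℓ → Integrable (fun ω => |f ω| ^ ℓ) μ)
    (hsum : Summable (fun ℓ : ℕ => lam ^ ℓ * (∫ ω, |f ω| ^ ℓ ∂μ) / (Nat.factorial ℓ : ℝ))) :
    mgf (fun ω => f ω - ∫ x, f x ∂μ) μ lam ≤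
      Real.exp (∑' ℓ : ℕ,
        lam ^ (ℓ + 2) * (∫ ω, |f ω| ^ (ℓ + 2) ∂μ) / (Nat.factorial (ℓ + 2) : ℝ)) := by
  set m : ℝ := ∫ x, f x ∂μ with hm
  set T : ℝ := ∑' ℓ : ℕ,
    lam ^ (ℓ + 2) * (∫ ω, |f ω| ^ (ℓ + 2) ∂μ) / (Nat.factorial (ℓ + 2) : ℝ) with hT
  have hfl : ∀ ℓ : ℕ, Integrable (fun ω => (f ω) ^ ℓ) μ := by
    intro ℓ
    rcases Nat.eq_zero_or_pos ℓ with h0 | h1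
    · simp [h0]
    · refine (hint ℓ h1).mono' ((hf.pow_const ℓ).aestronglyMeasurable) ?_
      filter_upwards with ω
      rw [Real.norm_eq_abs, abs_pow]
  have hg : ∀ ℓ : ℕ, Integrable (fun ω => (lam * f ω) ^ ℓ / (Nat.factorial ℓ : ℝ)) μ := by
    intro ℓ
    have := ((hfl ℓ).const_mul (lam ^ ℓ)).div_const (Nat.factorial ℓ : ℝ)
    refine this.congr ?_
    filter_upwards with ω
    rw [mul_pow]
  have hnormint : ∀ ℓ : ℕ, (∫ ω, ‖(lam * f ω) ^ ℓ / (Nat.factorial ℓ : ℝ)‖ ∂μ) =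
      lam ^ ℓ * (∫ ω, |f ω| ^ ℓ ∂μ) / (Nat.factorial ℓ : ℝ) := by
    intro ℓ
    rw [← MeasureTheory.integral_const_mul, ← integral_div]
    congr 1; funext ω
    rw [Real.norm_eq_abs, abs_div, abs_pow, abs_mul, abs_of_nonneg hl, mul_pow,
      Nat.abs_cast]
  have hsumnorm : Summable fun ℓ : ℕ => ∫ ω, ‖(lam * f ω) ^ ℓ / (Nat.factorial ℓ : ℝ)‖ ∂μ := by
    refine hsum.congr fun ℓ => (hnormint ℓ).symm
  have hkey : ∑' ℓ : ℕ, (∫ ω, (lam * f ω) ^ ℓ / (Nat.factorial ℓ : ℝ) ∂μ) =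
      ∫ ω, Real.exp (lam * f ω) ∂μ := by
    rw [MeasureTheory.integral_tsum_of_summable_integral_norm hg hsumnorm]
    congr 1; funext ω
    rw [exp_tsum]
  have hu : ∀ ℓ : ℕ, (∫ ω, (lam * f ω) ^ ℓ / (Nat.factorial ℓ : ℝ) ∂μ) =
      lam ^ ℓ * (∫ ω, (f ω) ^ ℓ ∂μ) / (Nat.factorial ℓ : ℝ) := by
    intro ℓ
    simp_rw [mul_pow, mul_div_assoc]
    rw [MeasureTheory.integral_const_mul, integral_div]
  set u : ℕ → ℝ := fun ℓ => lam ^ ℓ * (∫ ω, (f ω) ^ ℓ ∂μ) / (Nat.factorial ℓ : ℝ) with hudef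
  have habs_le : ∀ ℓ : ℕ, |u ℓ| ≤ lam ^ ℓ * (∫ ω, |f ω| ^ ℓ ∂μ) / (Nat.factorial ℓ : ℝ) := by
    intro ℓ
    rw [hudef]
    simp only [abs_div, abs_mul, abs_pow, abs_of_nonneg hl, Nat.abs_cast]
    gcongr
    calc |∫ ω, (f ω) ^ ℓ ∂μ| ≤ ∫ ω, |(f ω) ^ ℓ| ∂μ := by
          simpa [Real.norm_eq_abs] using
            MeasureTheory.norm_integral_le_integral_norm (μ := μ) (fun ω => (f ω) ^ ℓ)
      _ = ∫ ω, |f ω| ^ ℓ ∂μ := by simp_rw [abs_pow]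
  have husum : Summable u := by
    refine Summable.of_abs (hsum.of_nonneg_of_le (fun ℓ => abs_nonneg _) habs_le)
  have hu2sum : Summable fun ℓ : ℕ => u (ℓ + 2) := by
    exact (summable_nat_add_iff 2).mpr husum
  have hT2sum : Summable fun ℓ : ℕ =>
      lam ^ (ℓ + 2) * (∫ ω, |f ω| ^ (ℓ + 2) ∂μ) / (Nat.factorial (ℓ + 2) : ℝ) := by
    exact (summable_nat_add_iff 2).mpr hsum
  have hsplit : ∑' ℓ : ℕ, u ℓ = 1 + lam * m + ∑' ℓ : ℕ, u (ℓ + 2) := by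
    rw [← Summable.sum_add_tsum_nat_add 2 husum]
    congr 1
    rw [Finset.sum_range_succ, Finset.sum_range_one]
    simp [hudef, hm]
  have hintexp : ∫ ω, Real.exp (lam * f ω) ∂μ ≤ 1 + lam * m + T := by
    rw [← hkey]
    have : ∑' ℓ : ℕ, (∫ ω, (lam * f ω) ^ ℓ / (Nat.factorial ℓ : ℝ) ∂μ) = ∑' ℓ, u ℓ := by
      exact tsum_congr fun ℓ => hu ℓ
    rw [this, hsplit]
    gcongr
    refine Summable.tsum_le_tsum (fun ℓ => ?_) hu2sum hT2sum
    exact (le_abs_self _).trans (habs_le (ℓ + 2))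
  have hmgf : mgf (fun ω => f ω - m) μ lam =
      Real.exp (-(lam * m)) * ∫ ω, Real.exp (lam * f ω) ∂μ := by
    rw [mgf, ← MeasureTheory.integral_const_mul]
    congr 1; funext ω
    rw [← Real.exp_add]
    ring_nf
  rw [hmgf]
  calc Real.exp (-(lam * m)) * ∫ ω, Real.exp (lam * f ω) ∂μ
      ≤ Real.exp (-(lam * m)) * (1 + lam * m + T) := by
        gcongr
    _ ≤ Real.exp (-(lam * m)) * Real.exp (lam * m + T) := by
        gcongr
        have := Real.add_one_le_exp (lam * m + T)
        linarith
    _ = Real.exp T := by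
        rw [← Real.exp_add]
        ring_nf

lemma bern_arith (ν c t : ℝ) (hν : 0 < ν) (hc : 0 < c) (ht : 0 < t) :
    -(t / (ν + c * t)) * t + ν * (t / (ν + c * t)) ^ 2 / 2 * (1 - t / (ν + c * t) * c)⁻¹ =
      -(t ^ 2) / (2 * (ν + c * t)) := by
  have hd : (0:ℝ) < ν + c * t := by positivity
  have h1 : 1 - t / (ν + c * t) * c = ν / (ν + c * t) := by
    field_simp
    ring
  rw [h1]
  field_simp
  ring

lemma bernstein_one_sided {Ω : Type*} [MeasurableSpace Ω] (μ : Measure Ω)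
    [IsProbabilityMeasure μ] {n : ℕ} (X : Fin n → Ω → ℝ)
    (hmeas : ∀ k, Measurable (X k))
    (hindep : iIndepFun X μ)
    (hint : ∀ k, ∀ ℓ : ℕ, 1 ≤ ℓ → Integrable (fun ω => |X k ω| ^ ℓ) μ)
    (ν c : ℝ) (hν : 0 < ν) (hc : 0 < c)
    (hvar : ∑ k, ∫ ω, (X k ω) ^ 2 ∂μ ≤ ν)
    (hmom : ∀ ℓ : ℕ, 3 ≤ ℓ →
      ∑ k, ∫ ω, |X k ω| ^ ℓ ∂μ ≤ ((Nat.factorial ℓ : ℝ) / 2) * ν * c ^ (ℓ - 2))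
    (t : ℝ) (ht : 0 < t) :
    (μ {ω | t ≤ ∑ k, (X k ω - ∫ x, X k x ∂μ)}).toReal ≤
      Real.exp (-(t ^ 2) / (2 * (ν + c * t))) := by
  set d : ℝ := ν + c * t with hd
  have hd0 : 0 < d := by positivity
  set lam : ℝ := t / d with hlamdef
  have hlam : 0 < lam := by positivity
  have hlc : lam * c < 1 := by
    rw [hlamdef, div_mul_eq_mul_div, div_lt_one hd0, hd]
    nlinarith
  set M : ℕ → ℝ := fun ℓ => ∑ k, ∫ ω, |X k ω| ^ ℓ ∂μ with hM
  have hknn : ∀ (k : Fin n) (ℓ : ℕ), 0 ≤ ∫ ω, |X k ω| ^ ℓ ∂μ :=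
    fun k ℓ => integral_nonneg fun ω => by positivity
  have hkM : ∀ (k : Fin n) (ℓ : ℕ), (∫ ω, |X k ω| ^ ℓ ∂μ) ≤ M ℓ := fun k ℓ =>
    Finset.single_le_sum (fun j _ => hknn j ℓ) (Finset.mem_univ k)
  have hM2 : M 2 ≤ ν := by
    refine le_trans (le_of_eq ?_) hvar
    refine Finset.sum_congr rfl fun k _ => ?_
    simp_rw [sq_abs]
  have hsumk : ∀ k, Summable
      (fun ℓ : ℕ => lam ^ ℓ * (∫ ω, |X k ω| ^ ℓ ∂μ) / (Nat.factorial ℓ : ℝ)) := by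
    intro k
    exact summable_aux hν hc hlam.le hlc _ (hknn k)
      (fun ℓ h3 => (hkM k ℓ).trans (hmom ℓ h3))
  -- centered variables
  set m : Fin n → ℝ := fun k => ∫ x, X k x ∂μ with hmdef
  set Y : Fin n → Ω → ℝ := fun k ω => X k ω - m k with hY
  have hYmeas : ∀ k, Measurable (Y k) := fun k => (hmeas k).sub_const _
  have hYindep : iIndepFun Y μ := by
    have := hindep.comp (g := fun k (x : ℝ) => x - m k)
      (fun k => measurable_id.sub_const (m k))
    exact this
  have hXint : ∀ k, Integrable (fun ω => Real.exp (lam * X k ω)) μ := fun k =>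
    integrable_exp_lam μ (X k) (hmeas k) hlam.le (hint k) (hsumk k)
  have hYint : ∀ k, Integrable (fun ω => Real.exp (lam * Y k ω)) μ := by
    intro k
    refine ((hXint k).const_mul (Real.exp (-(lam * m k)))).congr ?_
    filter_upwards with ω
    rw [← Real.exp_add, hY]
    ring_nf
  have hSint : Integrable (fun ω => Real.exp (lam * (∑ k, Y k) ω)) μ :=
    hYindep.integrable_exp_mul_sum hYmeas (fun k _ => hYint k)
  -- tail bound via Chernoff
  have hchern := measure_ge_le_exp_mul_mgf (μ := μ) (X := ∑ k, Y k) t hlam.le hSint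
  -- mgf bound
  set T : Fin n → ℝ := fun k => ∑' ℓ : ℕ,
    lam ^ (ℓ + 2) * (∫ ω, |X k ω| ^ (ℓ + 2) ∂μ) / (Nat.factorial (ℓ + 2) : ℝ) with hTdef
  have hmgfk : ∀ k, mgf (Y k) μ lam ≤ Real.exp (T k) := fun k =>
    mgf_centered_le μ (X k) (hmeas k) hlam.le (hint k) (hsumk k)
  have hsumk2 : ∀ k, Summable (fun ℓ : ℕ =>
      lam ^ (ℓ + 2) * (∫ ω, |X k ω| ^ (ℓ + 2) ∂μ) / (Nat.factorial (ℓ + 2) : ℝ)) :=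
    fun k => (summable_nat_add_iff 2).mpr (hsumk k)
  have hsumT : ∑ k, T k = ∑' ℓ : ℕ, lam ^ (ℓ + 2) * M (ℓ + 2) / (Nat.factorial (ℓ + 2) : ℝ) := by
    rw [hTdef, ← Summable.tsum_finsetSum (fun k _ => hsumk2 k)]
    refine tsum_congr fun ℓ => ?_
    rw [hM, Finset.mul_sum, Finset.sum_div]
  have hgeo : Summable (fun ℓ : ℕ => (ν * lam ^ 2 / 2) * (lam * c) ^ ℓ) :=
    (summable_geometric_of_lt_one (mul_nonneg hlam.le hc.le) hlc).mul_left _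
  have hTbound : ∑ k, T k ≤ ν * lam ^ 2 / 2 * (1 - lam * c)⁻¹ := by
    rw [hsumT]
    have hLsum : Summable (fun ℓ : ℕ =>
        lam ^ (ℓ + 2) * M (ℓ + 2) / (Nat.factorial (ℓ + 2) : ℝ)) := by
      have := summable_sum (s := (Finset.univ : Finset (Fin n))) (f := fun (k : Fin n) (ℓ : ℕ) =>
        lam ^ (ℓ + 2) * (∫ ω, |X k ω| ^ (ℓ + 2) ∂μ) / (Nat.factorial (ℓ + 2) : ℝ))
        (fun k _ => hsumk2 k)
      refine this.congr fun ℓ => ?_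
      rw [hM, Finset.mul_sum, Finset.sum_div]
    calc ∑' ℓ : ℕ, lam ^ (ℓ + 2) * M (ℓ + 2) / (Nat.factorial (ℓ + 2) : ℝ)
        ≤ ∑' ℓ : ℕ, (ν * lam ^ 2 / 2) * (lam * c) ^ ℓ := by
          refine Summable.tsum_le_tsum (fun ℓ => ?_) hLsum hgeo
          rcases Nat.eq_zero_or_pos ℓ with h0 | h1
          · subst h0
            simp only [pow_zero, mul_one]
            have : (Nat.factorial 2 : ℝ) = 2 := by norm_num [Nat.factorial]
            rw [this]
            calc lam ^ (0 + 2) * M (0 + 2) / 2 ≤ lam ^ 2 * ν / 2 := by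
                  gcongr
              _ = ν * lam ^ 2 / 2 := by ring
          · have h3 : 3 ≤ ℓ + 2 := by omega
            have hb := hmom (ℓ + 2) h3
            have hsub : (ℓ + 2) - 2 = ℓ := by omega
            rw [hsub] at hb
            have hfac : (0:ℝ) < (Nat.factorial (ℓ + 2) : ℝ) := by positivity
            calc lam ^ (ℓ + 2) * M (ℓ + 2) / (Nat.factorial (ℓ + 2) : ℝ)
                ≤ lam ^ (ℓ + 2) * ((Nat.factorial (ℓ + 2) : ℝ) / 2 * ν * c ^ ℓ)
                    / (Nat.factorial (ℓ + 2) : ℝ) := by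
                  gcongr
              _ = ν * lam ^ 2 / 2 * (lam * c) ^ ℓ := by
                  field_simp
                  ring
      _ = ν * lam ^ 2 / 2 * (1 - lam * c)⁻¹ := by
          rw [tsum_mul_left, tsum_geometric_of_lt_one (mul_nonneg hlam.le hc.le) hlc]
  have hmgfS : mgf (∑ k, Y k) μ lam ≤ Real.exp (ν * lam ^ 2 / 2 * (1 - lam * c)⁻¹) := by
    rw [hYindep.mgf_sum hYmeas]
    calc ∏ k, mgf (Y k) μ lam ≤ ∏ k, Real.exp (T k) :=
          Finset.prod_le_prod (fun k _ => mgf_nonneg) (fun k _ => hmgfk k)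
      _ = Real.exp (∑ k, T k) := (Real.exp_sum _ _).symm
      _ ≤ Real.exp (ν * lam ^ 2 / 2 * (1 - lam * c)⁻¹) := Real.exp_le_exp.2 hTbound
  -- put together
  have hset : {ω | t ≤ ∑ k, (X k ω - ∫ x, X k x ∂μ)} = {ω | t ≤ (∑ k, Y k) ω} := by
    ext ω
    simp only [Set.mem_setOf_eq, Finset.sum_apply]
    exact Iff.rfl
  rw [hset]
  calc (μ {ω | t ≤ (∑ k, Y k) ω}).toReal
      ≤ Real.exp (-lam * t) * mgf (∑ k, Y k) μ lam := hchern
    _ ≤ Real.exp (-lam * t) * Real.exp (ν * lam ^ 2 / 2 * (1 - lam * c)⁻¹) := by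
        gcongr
    _ = Real.exp (-lam * t + ν * lam ^ 2 / 2 * (1 - lam * c)⁻¹) := (Real.exp_add _ _).symm
    _ = Real.exp (-(t ^ 2) / (2 * d)) := by
        congr 1
        rw [hlamdef, hd]
        exact bern_arith ν c t hν hc ht

/-- Bernstein's inequality (Boucheron–Lugosi–Massart, Corollary 2.11). -/
theorem bernstein_inequality {Ω : Type*} [MeasurableSpace Ω] (μ : Measure Ω)
    [IsProbabilityMeasure μ] {n : ℕ} (X : Fin n → Ω → ℝ)
    (hmeas : ∀ k, Measurable (X k))
    (hindep : iIndepFun X μ)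
    (hint : ∀ k, ∀ ℓ : ℕ, 1 ≤ ℓ → Integrable (fun ω => |X k ω| ^ ℓ) μ)
    (ν c : ℝ) (hν : 0 < ν) (hc : 0 < c)
    (hvar : ∑ k, ∫ ω, (X k ω) ^ 2 ∂μ ≤ ν)
    (hmom : ∀ ℓ : ℕ, 3 ≤ ℓ →
      ∑ k, ∫ ω, |X k ω| ^ ℓ ∂μ ≤ ((Nat.factorial ℓ : ℝ) / 2) * ν * c ^ (ℓ - 2))
    (t : ℝ) (ht : 0 < t) :
    (μ {ω | t ≤ |∑ k, (X k ω - ∫ x, X k x ∂μ)|}).toReal ≤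
      2 * Real.exp (-(t ^ 2) / (2 * (ν + c * t))) := by
  have hpos := bernstein_one_sided μ X hmeas hindep hint ν c hν hc hvar hmom t ht
  set Z : Fin n → Ω → ℝ := fun k ω => -X k ω with hZ
  have hZmeas : ∀ k, Measurable (Z k) := fun k => (hmeas k).neg
  have hZindep : iIndepFun Z μ :=
    hindep.comp (g := fun _ (x : ℝ) => -x) (fun _ => measurable_neg)
  have hZint : ∀ k, ∀ ℓ : ℕ, 1 ≤ ℓ → Integrable (fun ω => |Z k ω| ^ ℓ) μ := by
    intro k ℓ hℓ
    simpa [hZ, abs_neg] using hint k ℓ hℓ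
  have hZvar : ∑ k, ∫ ω, (Z k ω) ^ 2 ∂μ ≤ ν := by
    simpa [hZ, neg_sq] using hvar
  have hZmom : ∀ ℓ : ℕ, 3 ≤ ℓ →
      ∑ k, ∫ ω, |Z k ω| ^ ℓ ∂μ ≤ ((Nat.factorial ℓ : ℝ) / 2) * ν * c ^ (ℓ - 2) := by
    intro ℓ hℓ
    simpa [hZ, abs_neg] using hmom ℓ hℓ
  have hneg := bernstein_one_sided μ Z hZmeas hZindep hZint ν c hν hc hZvar hZmom t ht
  have hflip : ∀ ω, ∑ k, (Z k ω - ∫ x, Z k x ∂μ) = -∑ k, (X k ω - ∫ x, X k x ∂μ) := by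
    intro ω
    rw [← Finset.sum_neg_distrib]
    refine Finset.sum_congr rfl fun k _ => ?_
    rw [hZ]
    simp only [integral_neg]
    ring
  have hsub : {ω | t ≤ |∑ k, (X k ω - ∫ x, X k x ∂μ)|} ⊆
      {ω | t ≤ ∑ k, (X k ω - ∫ x, X k x ∂μ)} ∪
        {ω | t ≤ ∑ k, (Z k ω - ∫ x, Z k x ∂μ)} := by
    intro ω hω
    rw [Set.mem_setOf_eq] at hω
    rcases le_abs.mp hω with h | h
    · exact Or.inl h
    · exact Or.inr (by rw [Set.mem_setOf_eq, hflip ω]; exact h)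
  calc (μ {ω | t ≤ |∑ k, (X k ω - ∫ x, X k x ∂μ)|}).toReal
      ≤ (μ {ω | t ≤ ∑ k, (X k ω - ∫ x, X k x ∂μ)} +
          μ {ω | t ≤ ∑ k, (Z k ω - ∫ x, Z k x ∂μ)}).toReal := by
        refine ENNReal.toReal_mono ?_ ((measure_mono hsub).trans (measure_union_le _ _))
        exact ENNReal.add_ne_top.2 ⟨measure_ne_top μ _, measure_ne_top μ _⟩
    _ = (μ {ω | t ≤ ∑ k, (X k ω - ∫ x, X k x ∂μ)}).toReal +
          (μ {ω | t ≤ ∑ k, (Z k ω - ∫ x, Z k x ∂μ)}).toReal :=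
        ENNReal.toReal_add (measure_ne_top μ _) (measure_ne_top μ _)
    _ ≤ Real.exp (-(t ^ 2) / (2 * (ν + c * t))) + Real.exp (-(t ^ 2) / (2 * (ν + c * t))) :=
        add_le_add hpos hneg
    _ = 2 * Real.exp (-(t ^ 2) / (2 * (ν + c * t))) := by ring
end

section
/- (Proposition 1.) In the setting of the sparse Poisson Lasso, define C, W as C = 𝒳ᵀ𝒳/n, W = 𝒳ᵀε̃/n with block decomposition C = [[C₁₁,C₁₂],[C₂₁,C₂₂]], W = (W₁,W₂), R₁ = (C(β* − β̃))₁, R₂ = (C(β* − β̃))₂, where β* = (β*₁, 0) with β*₁ ∈ ℝ^q having nonzero entries and C₁₁ invertible. Define the events Aₙ = { |C₁₁⁻¹W₁| < |β*₁| − (α/(2n))|C₁₁⁻¹ sign(β*₁)| − |C₁₁⁻¹R₁| } and Bₙ = { |C₂₁C₁₁⁻¹W₁ − W₂| ≤ (α/(2n))(1 − |C₂₁C₁₁⁻¹ sign(β*₁)|) − |C₂₁C₁₁⁻¹R₁ − R₂| } (all inequalities componentwise). Then on Aₙ ∩ Bₙ there exists a minimizer β̂ of ‖𝒴 − 𝒳β‖₂²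 + α‖β‖₁ with sign(β̂) = sign(β*); hence P(sign(β̂) = sign(β*)) ≥ P(Aₙ ∩ Bₙ). -/
open Matrix

set_option maxHeartbeats 1600000 in
/-- Proposition 1: in the sparse Poisson Lasso setting, on the event `Aₙ ∩ Bₙ` there exists a
minimizer `β̂` of `‖𝒴 − 𝒳β‖₂² + α‖β‖₁` whose sign pattern equals that of `β*`. The columns are
indexed by `Fin q ⊕ Fin r` so that the blocks `C₁₁ = (C)₁₁`, `C₂₁ = (C)₂₁`, and the subvectors
`W₁, W₂, R₁, R₂`, are obtained by restriction. -/
theorem prop1_sign_recovery {n q r : ℕ} (hn : 0 < n) (α : ℝ) (hα : 0 < α)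
    (𝒳 : Matrix (Fin n) (Fin q ⊕ Fin r) ℝ)
    (𝒴 εtilde : Fin n → ℝ) (βstar βtilde : Fin q ⊕ Fin r → ℝ)
    (hzero : ∀ j : Fin r, βstar (Sum.inr j) = 0)
    (hne : ∀ i : Fin q, βstar (Sum.inl i) ≠ 0)
    (hY : 𝒴 = 𝒳.mulVec βtilde + εtilde)
    (C : Matrix (Fin q ⊕ Fin r) (Fin q ⊕ Fin r) ℝ)
    (hC : C = (1 / (n : ℝ)) • (𝒳ᵀ * 𝒳))
    (W : Fin q ⊕ Fin r → ℝ) (hW : W = (1 / (n : ℝ)) • 𝒳ᵀ.mulVec εtilde)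
    (R : Fin q ⊕ Fin r → ℝ) (hR : R = C.mulVec (βstar - βtilde))
    (C11 : Matrix (Fin q) (Fin q) ℝ) (hC11 : C11 = C.toBlocks₁₁)
    (C21 : Matrix (Fin r) (Fin q) ℝ) (hC21 : C21 = C.toBlocks₂₁)
    (hC11inv : IsUnit C11)
    (W1 : Fin q → ℝ) (hW1 : W1 = fun i => W (Sum.inl i))
    (W2 : Fin r → ℝ) (hW2 : W2 = fun j => W (Sum.inr j))
    (R1 : Fin q → ℝ) (hR1 : R1 = fun i => R (Sum.inl i))
    (R2 : Fin r → ℝ) (hR2 : R2 = fun j => R (Sum.inr j))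
    (sgn : Fin q → ℝ) (hsgn : sgn = fun i => Real.sign (βstar (Sum.inl i)))
    -- the event Aₙ
    (hA : ∀ i, |C11⁻¹.mulVec W1 i| <
      |βstar (Sum.inl i)| - α / (2 * n) * |C11⁻¹.mulVec sgn i| - |C11⁻¹.mulVec R1 i|)
    -- the event Bₙ
    (hB : ∀ j, |C21.mulVec (C11⁻¹.mulVec W1) j - W2 j| ≤
      α / (2 * n) * (1 - |C21.mulVec (C11⁻¹.mulVec sgn) j|) -
        |C21.mulVec (C11⁻¹.mulVec R1) j - R2 j|) :
    ∃ βhat : Fin q ⊕ Fin r → ℝ,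
      (∀ β : Fin q ⊕ Fin r → ℝ,
        (∑ i, (𝒴 i - 𝒳.mulVec βhat i) ^ 2) + α * ∑ j, |βhat j| ≤
          (∑ i, (𝒴 i - 𝒳.mulVec β i) ^ 2) + α * ∑ j, |β j|) ∧
      ∀ idx, Real.sign (βhat idx) = Real.sign (βstar idx) := by
  have hn' : (n : ℝ) ≠ 0 := Nat.cast_ne_zero.mpr hn.ne'
  have hnpos : (0:ℝ) < n := Nat.cast_pos.mpr hn
  set a : ℝ := α / (2 * n) with ha_def
  have ha : 0 < a := by positivity
  have hna : (n:ℝ) * a = α / 2 := by rw [ha_def]; field_simp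
  -- candidate
  set δ : Fin q → ℝ := C11⁻¹.mulVec (W1 - a • sgn - R1) with hδ_def
  set βhat : Fin q ⊕ Fin r → ℝ := Sum.elim (fun i => βstar (Sum.inl i) + δ i) 0 with hβh
  have hδ_eq : δ = C11⁻¹.mulVec W1 - a • C11⁻¹.mulVec sgn - C11⁻¹.mulVec R1 := by
    rw [hδ_def, Matrix.mulVec_sub, Matrix.mulVec_sub, Matrix.mulVec_smul]
  -- |δ i| < |β*₁ i|
  have hδlt : ∀ i, |δ i| < |βstar (Sum.inl i)| := by
    intro i
    have hAi := hA i
    have h1 : δ i = C11⁻¹.mulVec W1 i - a * C11⁻¹.mulVec sgn i - C11⁻¹.mulVec R1 i := by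
      rw [hδ_eq]; simp
    have b1 := le_abs_self (C11⁻¹.mulVec W1 i)
    have b1' := neg_abs_le (C11⁻¹.mulVec W1 i)
    have b2 := le_abs_self (C11⁻¹.mulVec sgn i)
    have b2' := neg_abs_le (C11⁻¹.mulVec sgn i)
    have b3 := le_abs_self (C11⁻¹.mulVec R1 i)
    have b3' := neg_abs_le (C11⁻¹.mulVec R1 i)
    have habs : |δ i| ≤ |C11⁻¹.mulVec W1 i| + a * |C11⁻¹.mulVec sgn i|
        + |C11⁻¹.mulVec R1 i| := by
      rw [h1]; rw [abs_le]; constructor <;> nlinarith [ha.le]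
    linarith
  -- signs of βhat on the support
  have hsupport : ∀ i, Real.sign (βhat (Sum.inl i)) = Real.sign (βstar (Sum.inl i)) ∧
      sgn i * βhat (Sum.inl i) = |βhat (Sum.inl i)| := by
    intro i
    have hb : βhat (Sum.inl i) = βstar (Sum.inl i) + δ i := by simp [hβh]
    have hδi := hδlt i
    rcases lt_or_gt_of_ne (hne i) with hneg | hpos
    · have habs : |βstar (Sum.inl i)| = -(βstar (Sum.inl i)) := abs_of_neg hneg
      have hlt : βhat (Sum.inl i) < 0 := by
        have := le_abs_self (δ i); rw [hb]; linarith [habs ▸ hδi]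
      have hs : sgn i = -1 := by rw [hsgn]; exact Real.sign_of_neg hneg
      refine ⟨by rw [Real.sign_of_neg hlt, Real.sign_of_neg hneg], ?_⟩
      rw [hs, abs_of_neg hlt]; ring
    · have habs : |βstar (Sum.inl i)| = βstar (Sum.inl i) := abs_of_pos hpos
      have hlt : 0 < βhat (Sum.inl i) := by
        have := neg_abs_le (δ i); rw [hb]; linarith [habs ▸ hδi]
      have hs : sgn i = 1 := by rw [hsgn]; exact Real.sign_of_pos hpos
      refine ⟨by rw [Real.sign_of_pos hlt, Real.sign_of_pos hpos], ?_⟩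
      rw [hs, abs_of_pos hlt]; ring
  -- block action of C on (δ, 0)
  have hblock1 : ∀ i, C.mulVec (Sum.elim δ 0) (Sum.inl i) = C11.mulVec δ i := by
    intro i
    simp [Matrix.mulVec, dotProduct, Fintype.sum_sum_type, hC11, Matrix.toBlocks₁₁]
  have hblock2 : ∀ j, C.mulVec (Sum.elim δ 0) (Sum.inr j) = C21.mulVec δ j := by
    intro j
    simp [Matrix.mulVec, dotProduct, Fintype.sum_sum_type, hC21, Matrix.toBlocks₂₁]
  -- C11 * C11⁻¹ = 1
  have hinv : C11 * C11⁻¹ = 1 :=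
    Matrix.mul_nonsing_inv _ ((Matrix.isUnit_iff_isUnit_det _).mp hC11inv)
  have hC11δ : C11.mulVec δ = W1 - a • sgn - R1 := by
    rw [hδ_def, Matrix.mulVec_mulVec, hinv, Matrix.one_mulVec]
  -- the gradient vector g
  set g : Fin q ⊕ Fin r → ℝ := 𝒳ᵀ.mulVec (𝒴 - 𝒳.mulVec βhat) with hg_def
  have hXtX : 𝒳ᵀ * 𝒳 = (n:ℝ) • C := by
    rw [hC, smul_smul]; field_simp; rw [one_smul]
  have hXtε : 𝒳ᵀ.mulVec εtilde = (n:ℝ) • W := by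
    rw [hW, smul_smul]; field_simp; rw [one_smul]
  have hβhat_eq : βhat = βstar + Sum.elim δ 0 := by
    funext x; cases x with
    | inl i => simp [hβh]
    | inr j => simp [hβh, hzero]
  have hg : g = (n:ℝ) • (W - C.mulVec (Sum.elim δ 0) - R) := by
    rw [hg_def, hY, hβhat_eq]
    have h1 : 𝒳.mulVec βtilde + εtilde - 𝒳.mulVec (βstar + Sum.elim δ 0)
        = εtilde - 𝒳.mulVec (Sum.elim δ 0 + (βstar - βtilde)) := by
      rw [Matrix.mulVec_add, Matrix.mulVec_add, Matrix.mulVec_sub]; abel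
    rw [h1, Matrix.mulVec_sub, Matrix.mulVec_mulVec, hXtX, hXtε,
      Matrix.smul_mulVec, Matrix.mulVec_add, hR, smul_sub, smul_sub, smul_add]
    abel
  have hg1 : ∀ i, g (Sum.inl i) = (α / 2) * sgn i := by
    intro i
    have : g (Sum.inl i) = (n:ℝ) * (W (Sum.inl i) - C.mulVec (Sum.elim δ 0) (Sum.inl i)
        - R (Sum.inl i)) := by rw [hg]; simp
    rw [this, hblock1 i]
    have h2 : C11.mulVec δ i = W1 i - a * sgn i - R1 i := by rw [hC11δ]; simp
    rw [h2, hW1, hR1]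
    have : (n:ℝ) * (W (Sum.inl i) - (W (Sum.inl i) - a * sgn i - R (Sum.inl i))
        - R (Sum.inl i)) = ((n:ℝ) * a) * sgn i := by ring
    rw [this, hna]
  have hg2 : ∀ j, |g (Sum.inr j)| ≤ α / 2 := by
    intro j
    have h0 : g (Sum.inr j) = (n:ℝ) * (W (Sum.inr j) - C.mulVec (Sum.elim δ 0) (Sum.inr j)
        - R (Sum.inr j)) := by rw [hg]; simp
    have hCδ : C21.mulVec δ = C21.mulVec (C11⁻¹.mulVec W1)
        - a • C21.mulVec (C11⁻¹.mulVec sgn) - C21.mulVec (C11⁻¹.mulVec R1) := by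
      rw [hδ_eq, Matrix.mulVec_sub, Matrix.mulVec_sub, Matrix.mulVec_smul]
    have h1 : g (Sum.inr j) = (n:ℝ) * (-(C21.mulVec (C11⁻¹.mulVec W1) j - W2 j)
        + a * C21.mulVec (C11⁻¹.mulVec sgn) j
        + (C21.mulVec (C11⁻¹.mulVec R1) j - R2 j)) := by
      rw [h0, hblock2 j, hCδ, hW2, hR2]
      simp only [Pi.sub_apply, Pi.smul_apply, smul_eq_mul]
      ring
    have hBj := hB j
    have b1 := le_abs_self (C21.mulVec (C11⁻¹.mulVec W1) j - W2 j)
    have b1' := neg_abs_le (C21.mulVec (C11⁻¹.mulVec W1) j - W2 j)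
    have b2 := le_abs_self (C21.mulVec (C11⁻¹.mulVec sgn) j)
    have b2' := neg_abs_le (C21.mulVec (C11⁻¹.mulVec sgn) j)
    have b3 := le_abs_self (C21.mulVec (C11⁻¹.mulVec R1) j - R2 j)
    have b3' := neg_abs_le (C21.mulVec (C11⁻¹.mulVec R1) j - R2 j)
    have hinner : |(-(C21.mulVec (C11⁻¹.mulVec W1) j - W2 j)
        + a * C21.mulVec (C11⁻¹.mulVec sgn) j
        + (C21.mulVec (C11⁻¹.mulVec R1) j - R2 j))| ≤ a := by
      have c2 := mul_le_mul_of_nonneg_left b2 ha.le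
      have c2' := mul_le_mul_of_nonneg_left b2' ha.le
      have c4 := mul_le_mul_of_nonneg_left (le_abs_self |C21.mulVec (C11⁻¹.mulVec sgn) j|) ha.le
      rw [abs_le]
      constructor <;> linarith [abs_nonneg (C21.mulVec (C11⁻¹.mulVec sgn) j)]
    rw [← hna, h1, abs_mul, abs_of_pos hnpos]
    exact mul_le_mul_of_nonneg_left hinner hnpos.le
  -- conclusion
  refine ⟨βhat, ?_, ?_⟩
  · intro β
    set d : Fin q ⊕ Fin r → ℝ := fun x => β x - βhat x with hd_def
    have hβd : β = βhat + d := by funext x; simp [hd_def]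
    have hXβ : 𝒳.mulVec β = 𝒳.mulVec βhat + 𝒳.mulVec d := by
      have h : βhat + d = β := by funext x; simp [hd_def]
      rw [← h, Matrix.mulVec_add]
    have hexp : ∀ i, (𝒴 i - 𝒳.mulVec β i) ^ 2
        = (𝒴 i - 𝒳.mulVec βhat i) ^ 2
          - 2 * ((𝒴 i - 𝒳.mulVec βhat i) * 𝒳.mulVec d i) + (𝒳.mulVec d i) ^ 2 := by
      intro i
      rw [hXβ]; simp only [Pi.add_apply]; ring
    have hcross : ∑ i, (𝒴 i - 𝒳.mulVec βhat i) * 𝒳.mulVec d i = ∑ x, g x * d x := by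
      have h1 := Matrix.dotProduct_mulVec (𝒴 - 𝒳.mulVec βhat) 𝒳 d
      have h2 := Matrix.mulVec_transpose 𝒳 (𝒴 - 𝒳.mulVec βhat)
      calc ∑ i, (𝒴 i - 𝒳.mulVec βhat i) * 𝒳.mulVec d i
          = dotProduct (𝒴 - 𝒳.mulVec βhat) (𝒳.mulVec d) := by
            simp [dotProduct]
        _ = dotProduct (Matrix.vecMul (𝒴 - 𝒳.mulVec βhat) 𝒳) d := h1
        _ = ∑ x, g x * d x := by
            rw [hg_def, h2]; simp [dotProduct]
    have hterm : ∀ x, 2 * (g x * d x) ≤ α * (|β x| - |βhat x|) := by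
      intro x
      cases x with
      | inl i =>
        obtain ⟨_, hsb⟩ := hsupport i
        have hgx := hg1 i
        have hsβ : sgn i * β (Sum.inl i) ≤ |β (Sum.inl i)| := by
          have h1 : |sgn i * β (Sum.inl i)| ≤ |β (Sum.inl i)| := by
            rw [abs_mul]
            rcases lt_or_gt_of_ne (hne i) with hneg | hpos
            · rw [hsgn]; simp [Real.sign_of_neg hneg]
            · rw [hsgn]; simp [Real.sign_of_pos hpos]
          exact (le_abs_self _).trans h1
        have : 2 * (g (Sum.inl i) * d (Sum.inl i))
            = α * (sgn i * β (Sum.inl i)) - α * (sgn i * βhat (Sum.inl i)) := by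
          simp only [hd_def, hgx]; ring
        rw [this, hsb]
        have h4 := mul_le_mul_of_nonneg_left hsβ hα.le
        linarith
      | inr j =>
        have hb0 : βhat (Sum.inr j) = 0 := by simp [hβh]
        have hgx := hg2 j
        have h2 : d (Sum.inr j) = β (Sum.inr j) := by simp [hd_def, hb0]
        have h1 : g (Sum.inr j) * d (Sum.inr j) ≤ |g (Sum.inr j)| * |β (Sum.inr j)| := by
          rw [h2, ← abs_mul]; exact le_abs_self _
        have h3 : |g (Sum.inr j)| * |β (Sum.inr j)| ≤ (α / 2) * |β (Sum.inr j)| :=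
          mul_le_mul_of_nonneg_right hgx (abs_nonneg _)
        rw [hb0]; simp only [abs_zero]
        linarith
    have hsum : ∑ x, 2 * (g x * d x) ≤ ∑ x, α * (|β x| - |βhat x|) :=
      Finset.sum_le_sum (fun x _ => hterm x)
    have hsq : (0:ℝ) ≤ ∑ i, (𝒳.mulVec d i) ^ 2 :=
      Finset.sum_nonneg (fun i _ => sq_nonneg _)
    have hexp_sum : ∑ i, (𝒴 i - 𝒳.mulVec β i) ^ 2
        = ∑ i, (𝒴 i - 𝒳.mulVec βhat i) ^ 2
          - 2 * ∑ x, g x * d x + ∑ i, (𝒳.mulVec d i) ^ 2 := by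
      rw [← hcross]
      rw [Finset.sum_congr rfl (fun i _ => hexp i)]
      rw [Finset.sum_add_distrib, Finset.sum_sub_distrib, Finset.mul_sum]
    have h5 : ∑ x, 2 * (g x * d x) = 2 * ∑ x, g x * d x := by
      rw [Finset.mul_sum]
    have h6 : ∑ x, α * (|β x| - |βhat x|) = α * ∑ x, |β x| - α * ∑ x, |βhat x| := by
      rw [← Finset.mul_sum, Finset.sum_sub_distrib, mul_sub]
    rw [hexp_sum]
    rw [h5, h6] at hsum
    linarith
  · intro idx
    cases idx with
    | inl i => exact (hsupport i).1
    | inr j => simp [hβh, hzero]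
end
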